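/- Let N ≥ 8 be an integer divisible by 4. The (N/4−1) × (N/4−1) real matrix P_1 with entries (P_1)_{pq} = (4/N)·p if q ≥ p and (P_1)_{pq} = −(4/N)·(N/4 − p) if q < p (for 1 ≤ p, q ≤ N/4 − 1) is invertible. -/

import Mathlib

/-- The `(N/4−1) × (N/4−1)` matrix `P₁`, with 1-indexed entries
`(P₁)_{pq} = (4/N)·p` if `q ≥ p`, and `−(4/N)·(N/4 − p)` if `q < p`.
Here the `Fin` index `p` corresponds to row `p+1`. -/
noncomputable def P1mat (N : ℕ) : Matrix (Fin (N / 4 - 1)) (Fin (N / 4 - 1)) ℝ :=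
  fun p q =>
    if (p : ℕ) ≤ (q : ℕ) then (4 / (N : ℝ)) * ((p : ℕ) + 1)
    else -(4 / (N : ℝ)) * ((N : ℝ) / 4 - ((p : ℕ) + 1))

theorem P1mat_isUnit (N : ℕ) (hN4 : 4 ∣ N) (hN8 : 8 ≤ N) : IsUnit (P1mat N) := by
  have hNpos : 0 < N := by omega
  have hNne : (N : ℝ) ≠ 0 := by positivity
  set n : ℕ := N / 4 - 1 with hn
  have hn1 : 1 ≤ n := by omega
  set c : ℝ := 4 / (N : ℝ) with hc
  have hcne : c ≠ 0 := by positivity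
  have hcM : c * ((N : ℝ) / 4) = 1 := by rw [hc]; field_simp
  rw [← Matrix.mulVec_injective_iff_isUnit]
  suffices key : ∀ v : Fin n → ℝ, (P1mat N).mulVec v = 0 → v = 0 by
    intro v w h
    have := key (v - w) (by rw [Matrix.mulVec_sub, h, sub_self])
    exact sub_eq_zero.mp this
  intro v hv
  have hrow : ∀ p : Fin n, (P1mat N).mulVec v p = 0 := fun p => congrFun hv p
  -- the sum of v is 0, from row 0
  have hS : ∑ q, v q = 0 := by
    have h0 := hrow ⟨0, by omega⟩
    simp only [Matrix.mulVec, dotProduct, P1mat] at h0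
    simp only [Fin.val_mk, Nat.zero_le, if_true, Nat.cast_zero, zero_add, mul_one] at h0
    rw [← Finset.mul_sum] at h0
    exact (mul_eq_zero.mp h0).resolve_left hcne
  -- v p = 0 for p with p+1 < n
  have hmid : ∀ p : Fin n, (p : ℕ) + 1 < n → v p = 0 := by
    intro p hp
    set p' : Fin n := ⟨(p : ℕ) + 1, hp⟩ with hp'
    have hdiff : ∀ q : Fin n,
        P1mat N p' q = P1mat N p q + (c - if (q : ℕ) = (p : ℕ) then 1 else 0) := by
      intro q
      simp only [P1mat, hp', Fin.val_mk]
      rcases lt_trichotomy (q : ℕ) (p : ℕ) with h | h | h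
      · rw [if_neg (by omega), if_neg (by omega), if_neg (by omega)]
        push_cast
        ring
      · rw [if_neg (by omega), if_pos (by omega), if_pos (by omega)]
        push_cast
        nlinarith [hcM]
      · rw [if_pos (by omega), if_pos (by omega), if_neg (by omega)]
        push_cast
        ring
    have h1 := hrow p'
    have h2 := hrow p
    simp only [Matrix.mulVec, dotProduct] at h1 h2
    rw [show (fun q => P1mat N p' q * v q) = fun q => P1mat N p q * v q
        + (c - if (q : ℕ) = (p : ℕ) then 1 else 0) * v q by
      funext q; rw [hdiff q]; ring] at h1
    rw [Finset.sum_add_distrib, h2, zero_add] at h1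
    have key2 : ∑ q : Fin n, (c - if (q : ℕ) = (p : ℕ) then 1 else 0) * v q
        = c * ∑ q, v q - v p := by
      rw [show (fun q : Fin n => (c - if (q : ℕ) = (p : ℕ) then 1 else 0) * v q)
          = fun q : Fin n => c * v q - (if q = p then v q else 0) by
        funext q
        by_cases hq : q = p
        · subst hq; rw [if_pos rfl, if_pos rfl]; ring
        · rw [if_neg (fun h => hq (Fin.ext h)), if_neg hq]; ring]
      rw [Finset.sum_sub_distrib, ← Finset.mul_sum, Finset.sum_ite_eq' _ p,
        if_pos (Finset.mem_univ p)]
    rw [key2, hS, mul_zero, zero_sub] at h1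
    linarith
  -- conclude
  funext p
  by_cases hp : (p : ℕ) + 1 < n
  · exact hmid p hp
  · have hpl : (p : ℕ) = n - 1 := by omega
    have : ∑ q, v q = v p := by
      apply Finset.sum_eq_single p
      · intro q _ hq
        apply hmid
        have : (q : ℕ) ≠ (p : ℕ) := fun h => hq (Fin.ext h)
        omega
      · simp
    rw [this] at hS
    simpa using hS
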